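/- If a permutation w ∈ S_n has Lehmer code L satisfying L(i+1) - L(i) ≥ 2 for some i, then w contains the pattern 1423 or the pattern 1432. -/
import Mathlib


/-- Lehmer code: `lehmer w i = #{j > i : w j < w i}`. -/
def lehmer {n : ℕ} (w : Equiv.Perm (Fin n)) (i : Fin n) : ℕ :=
  (Finset.univ.filter (fun j => i < j ∧ w j < w i)).card

/-- `w` contains the pattern `σ` (given as a function `Fin k → Fin k`). -/
def ContainsPattern {n k : ℕ} (w : Equiv.Perm (Fin n)) (σ : Fin k → Fin k) : Prop :=
  ∃ f : Fin k → Fin n, StrictMono f ∧ ∀ a b : Fin k, σ a < σ b ↔ w (f a) < w (f b)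

/-- The pattern 1423 (0-indexed values). -/
def p1423 : Fin 4 → Fin 4 := ![0, 3, 1, 2]

/-- The pattern 1432 (0-indexed values). -/
def p1432 : Fin 4 → Fin 4 := ![0, 3, 2, 1]

lemma build_pattern {n : ℕ} (w : Equiv.Perm (Fin n)) (a b c d : Fin n)
    (hab : a < b) (hbc : b < c) (hcd : c < d)
    (h1 : w a < w c) (h2 : w a < w d) (h3 : w c < w b) (h4 : w d < w b) :
    ContainsPattern w p1423 ∨ ContainsPattern w p1432 := by
  have E0 : ∀ (h : 0 < 4), (![a,b,c,d] : Fin 4 → Fin n) ⟨0, h⟩ = a := fun _ => rfl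
  have E1 : ∀ (h : 1 < 4), (![a,b,c,d] : Fin 4 → Fin n) ⟨1, h⟩ = b := fun _ => rfl
  have E2 : ∀ (h : 2 < 4), (![a,b,c,d] : Fin 4 → Fin n) ⟨2, h⟩ = c := fun _ => rfl
  have E3 : ∀ (h : 3 < 4), (![a,b,c,d] : Fin 4 → Fin n) ⟨3, h⟩ = d := fun _ => rfl
  have P0 : ∀ (h : 0 < 4), p1423 ⟨0, h⟩ = 0 := fun _ => rfl
  have P1 : ∀ (h : 1 < 4), p1423 ⟨1, h⟩ = 3 := fun _ => rfl
  have P2 : ∀ (h : 2 < 4), p1423 ⟨2, h⟩ = 1 := fun _ => rfl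
  have P3 : ∀ (h : 3 < 4), p1423 ⟨3, h⟩ = 2 := fun _ => rfl
  have Q0 : ∀ (h : 0 < 4), p1432 ⟨0, h⟩ = 0 := fun _ => rfl
  have Q1 : ∀ (h : 1 < 4), p1432 ⟨1, h⟩ = 3 := fun _ => rfl
  have Q2 : ∀ (h : 2 < 4), p1432 ⟨2, h⟩ = 2 := fun _ => rfl
  have Q3 : ∀ (h : 3 < 4), p1432 ⟨3, h⟩ = 1 := fun _ => rfl
  have h1' : (w a).val < (w c).val := h1
  have h2' : (w a).val < (w d).val := h2
  have h3' : (w c).val < (w b).val := h3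
  have h4' : (w d).val < (w b).val := h4
  have hmono : StrictMono ![a, b, c, d] := by simp [hab, hbc, hcd]
  have hne : (w c).val ≠ (w d).val := by
    intro e
    exact hcd.ne (w.injective (Fin.ext e))
  rcases Nat.lt_or_ge (w c).val (w d).val with h5' | h5'
  · left
    refine ⟨![a, b, c, d], hmono, ?_⟩
    intro x y
    fin_cases x <;> fin_cases y <;>
      simp only [E0, E1, E2, E3, P0, P1, P2, P3, Fin.lt_def, Fin.val_zero, Fin.val_one] <;>
      omega
  · have h5' : (w d).val < (w c).val := by omega
    right
    refine ⟨![a, b, c, d], hmono, ?_⟩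
    intro x y
    fin_cases x <;> fin_cases y <;>
      simp only [E0, E1, E2, E3, Q0, Q1, Q2, Q3, Fin.lt_def, Fin.val_zero, Fin.val_one] <;>
      omega

theorem stmt_1 {n : ℕ} (w : Equiv.Perm (Fin n)) (i : ℕ) (hi : i + 1 < n)
    (h : lehmer w ⟨i, Nat.lt_of_succ_lt hi⟩ + 2 ≤ lehmer w ⟨i + 1, hi⟩) :
    ContainsPattern w p1423 ∨ ContainsPattern w p1432 := by
  set i' : Fin n := ⟨i, Nat.lt_of_succ_lt hi⟩ with hi'def
  set i1 : Fin n := ⟨i + 1, hi⟩ with hi1def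
  set A := Finset.univ.filter (fun j => i' < j ∧ w j < w i') with hAdef
  set B := Finset.univ.filter (fun j => i1 < j ∧ w j < w i1) with hBdef
  have hA : lehmer w i' = A.card := rfl
  have hB : lehmer w i1 = B.card := rfl
  have hii : i' < i1 := by simp [hi'def, hi1def, Fin.lt_def]
  have hne : w i' ≠ w i1 := by
    intro e
    have := w.injective e
    simp [hi'def, hi1def, Fin.ext_iff] at this
  rcases lt_or_gt_of_ne hne with hw | hw
  · -- w i' < w i1 : main case
    have hAB : A ⊆ B := by
      intro j hj
      simp only [hAdef, hBdef, Finset.mem_filter, Finset.mem_univ, true_and] at hj ⊢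
      obtain ⟨hj1, hj2⟩ := hj
      have hjne : j ≠ i1 := by
        intro e; rw [e] at hj2; exact absurd (hj2.trans hw) (lt_irrefl _)
      have hj1' : i < j.val := hj1
      refine ⟨?_, hj2.trans hw⟩
      show i + 1 < j.val
      rcases Nat.lt_or_ge (i + 1) j.val with hc | hc
      · exact hc
      · exact absurd (Fin.ext (by omega : j.val = i + 1)) hjne
    have hcard : 1 < (B \ A).card := by
      rw [Finset.card_sdiff_of_subset hAB]; omega
    obtain ⟨a, ha, b, hb, hab⟩ := Finset.one_lt_card.mp hcard
    have key : ∀ x : Fin n, x ∈ B \ A → i1 < x ∧ w i' < w x ∧ w x < w i1 := by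
      intro x hx
      simp only [hAdef, hBdef, Finset.mem_sdiff, Finset.mem_filter, Finset.mem_univ,
        true_and] at hx
      obtain ⟨⟨hx1, hx2⟩, hx3⟩ := hx
      refine ⟨hx1, ?_, hx2⟩
      have hxi : i' < x := hii.trans hx1
      have hnlt : ¬ w x < w i' := fun hc => hx3 ⟨hxi, hc⟩
      rcases lt_or_eq_of_le (not_lt.mp hnlt) with hc | hc
      · exact hc
      · exact absurd (w.injective hc.symm) (fun e => (hxi.ne e.symm))
    obtain ⟨ha1, ha2, ha3⟩ := key a ha
    obtain ⟨hb1, hb2, hb3⟩ := key b hb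
    rcases hab.lt_or_gt with hlt | hlt
    · exact build_pattern w i' i1 a b hii ha1 hlt ha2 hb2 ha3 hb3
    · exact build_pattern w i' i1 b a hii hb1 hlt hb2 ha2 hb3 ha3
  · -- w i1 < w i' : contradiction
    exfalso
    have hBA : insert i1 B ⊆ A := by
      intro j hj
      simp only [hAdef, hBdef, Finset.mem_insert, Finset.mem_filter, Finset.mem_univ,
        true_and] at hj ⊢
      rcases hj with rfl | ⟨hj1, hj2⟩
      · exact ⟨hii, hw⟩
      · exact ⟨hii.trans hj1, hj2.trans hw⟩
    have hni : i1 ∉ B := by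
      simp only [hBdef, Finset.mem_filter, Finset.mem_univ, true_and, not_and]
      intro hc; exact absurd hc (lt_irrefl _)
    have hle := Finset.card_le_card hBA
    rw [Finset.card_insert_of_notMem hni] at hle
    omega
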